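/- arXiv:1407.0054 — 2 statements merged into one kernel-verified Lean document; each statement's English description precedes it below -/
import Mathlib

section
/- For every positive integer q and integers B, L with L ≥ 1, the sum S := Σ_{n=1}^{q-1} gcd(n, q) · |Σ_{b=B+1}^{B+L} e(-nb/q)| satisfies S ≪ d(q) · q · log q, where e(t) = exp(2πit) and d(q) is the number of divisors of q. More precisely, there is an absolute constant C such that S ≤ C · d(q) · q · log(q + 1). -/
open Complex Real

/-- `e(t) = exp(2πit)`. -/
noncomputable def e (t : ℝ) : ℂ := Complex.exp (2 * Real.pi * Complex.I * t)


lemma abs_exp_I_sub_one (x : ℝ) :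
    ‖Complex.exp (x * Complex.I) - 1‖ = 2 * |Real.sin (x / 2)| := by
  have h : Complex.exp ((x:ℂ) * Complex.I) - 1
      = Complex.exp ((x/2 : ℝ) * Complex.I) * (2 * Complex.I * Complex.sin ((x/2 : ℝ) : ℂ)) := by
    have hw : Complex.exp (((x/2:ℝ):ℂ) * Complex.I) ≠ 0 := Complex.exp_ne_zero _
    have hsq : Complex.exp ((x:ℂ) * Complex.I)
        = Complex.exp (((x/2:ℝ):ℂ) * Complex.I) * Complex.exp (((x/2:ℝ):ℂ) * Complex.I) := by
      rw [← Complex.exp_add]; push_cast; ring_nf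
    have hneg : Complex.exp (-(((x/2:ℝ):ℂ)) * Complex.I)
        = (Complex.exp (((x/2:ℝ):ℂ) * Complex.I))⁻¹ := by
      rw [← Complex.exp_neg]; ring_nf
    rw [Complex.sin, hsq, hneg]
    field_simp
    ring_nf
    rw [Complex.I_sq]
    ring
  rw [h, norm_mul, Complex.norm_exp_ofReal_mul_I, norm_mul, norm_mul, Complex.norm_two,
    Complex.norm_I, ← Complex.ofReal_sin, Complex.norm_real, Real.norm_eq_abs]
  push_cast
  ring


lemma geom_bound (z : ℂ) (hz : z ≠ 1) (hza : ‖z‖ = 1) (B L : ℤ) :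
    ‖∑ b ∈ Finset.Icc (B + 1) (B + L), z ^ b‖ ≤ 2 / ‖z - 1‖ := by
  have hz0 : z ≠ 0 := by rintro rfl; simp at hza
  have hsub : ‖z - 1‖ ≠ 0 := by
    simp only [ne_eq, norm_eq_zero, sub_eq_zero]; exact hz
  rcases le_or_gt L 0 with hL | hL
  · rw [Finset.Icc_eq_empty (by omega)]
    simp [div_nonneg, norm_nonneg]
  · have hre : ∑ b ∈ Finset.Icc (B + 1) (B + L), z ^ b
        = z ^ (B+1) * ∑ j ∈ Finset.range L.toNat, z ^ j := by
      rw [Finset.mul_sum]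
      refine Finset.sum_nbij' (fun b => (b - (B+1)).toNat) (fun j => B + 1 + (j:ℤ)) ?_ ?_ ?_ ?_ ?_
      · intro b hb; simp only [Finset.mem_Icc] at hb; simp only [Finset.mem_range]; omega
      · intro j hj; simp only [Finset.mem_range] at hj; simp only [Finset.mem_Icc]; omega
      · intro b hb; simp only [Finset.mem_Icc] at hb; rw [Int.toNat_of_nonneg (by omega)]; ring
      · intro j hj; simp
      · intro b hb
        simp only [Finset.mem_Icc] at hb
        rw [← zpow_natCast, ← zpow_add₀ hz0]
        congr 1
        rw [Int.toNat_of_nonneg (by omega)]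
        ring
    rw [hre, norm_mul]
    have h1 : ‖z ^ (B+1)‖ = 1 := by rw [norm_zpow, hza, one_zpow]
    rw [h1, one_mul]
    rw [geom_sum_eq hz, norm_div]
    gcongr
    calc ‖z ^ L.toNat - 1‖ ≤ ‖z ^ L.toNat‖ + 1 := by
          simpa using norm_sub_le (z ^ L.toNat) 1
      _ ≤ 2 := by rw [norm_pow, hza, one_pow]; norm_num

lemma sin_lower {n q : ℕ} (h1 : 1 ≤ n) (h2 : n < q) :
    2 * min (n:ℝ) ((q:ℝ) - n) / q ≤ Real.sin (π * n / q) := by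
  have hq : (0:ℝ) < q := by exact_mod_cast Nat.lt_of_le_of_lt (Nat.zero_le n) h2
  have hn : (0:ℝ) < n := by exact_mod_cast h1
  have hnq : (n:ℝ) < q := by exact_mod_cast h2
  rcases le_or_gt (2*n) q with h | h
  · have hmin : min (n:ℝ) ((q:ℝ) - n) = n := by
      apply min_eq_left; have : (2*n:ℝ) ≤ q := by exact_mod_cast h
      linarith
    rw [hmin]
    have hx0 : 0 ≤ π * n / q := by positivity
    have hx1 : π * n / q ≤ π / 2 := by
      rw [div_le_div_iff₀ hq (by norm_num)]
      have : (2*n:ℝ) ≤ q := by exact_mod_cast h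
      nlinarith [Real.pi_pos]
    have := Real.mul_le_sin hx0 hx1
    calc 2 * (n:ℝ) / q = 2 / π * (π * n / q) := by field_simp
      _ ≤ _ := this
  · have hmin : min (n:ℝ) ((q:ℝ) - n) = (q:ℝ) - n := by
      apply min_eq_right; have : (q:ℝ) < 2*n := by exact_mod_cast h
      linarith
    rw [hmin]
    have hrw : Real.sin (π * n / q) = Real.sin (π * ((q:ℝ)-n) / q) := by
      rw [← Real.sin_pi_sub]; congr 1; field_simp
    rw [hrw]
    have hx0 : 0 ≤ π * ((q:ℝ)-n) / q := by
      apply div_nonneg _ hq.le; have := Real.pi_pos; nlinarith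
    have hx1 : π * ((q:ℝ)-n) / q ≤ π / 2 := by
      rw [div_le_div_iff₀ hq (by norm_num)]
      have : (q:ℝ) < 2*n := by exact_mod_cast h
      nlinarith [Real.pi_pos]
    have := Real.mul_le_sin hx0 hx1
    calc 2 * ((q:ℝ)-n) / q = 2 / π * (π * ((q:ℝ)-n) / q) := by field_simp
      _ ≤ _ := this

lemma term_bound (q n : ℕ) (B L : ℤ) (h1 : 1 ≤ n) (h2 : n < q) :
    ‖∑ b ∈ Finset.Icc (B + 1) (B + L), e (-(((n : ℝ) * (b : ℝ)) / q))‖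
      ≤ (q / 2 : ℝ) * (1 / n + 1 / ((q:ℝ) - n)) := by
  have hq : (0:ℝ) < q := by exact_mod_cast Nat.lt_of_le_of_lt (Nat.zero_le n) h2
  have hn : (0:ℝ) < n := by exact_mod_cast h1
  have hnq : (n:ℝ) < q := by exact_mod_cast h2
  set z : ℂ := e (-((n:ℝ) / q)) with hzdef
  have hza : ‖z‖ = 1 := by
    rw [hzdef]; unfold e
    have : 2 * (π:ℂ) * Complex.I * ((-((n:ℝ)/q) : ℝ) : ℂ)
        = ((2 * π * (-((n:ℝ)/q)) : ℝ) : ℂ) * Complex.I := by push_cast; ring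
    rw [this, Complex.norm_exp_ofReal_mul_I]
  have hz1 : z ≠ 1 := by
    rw [hzdef]; unfold e
    intro hcon
    rw [Complex.exp_eq_one_iff] at hcon
    obtain ⟨k, hk⟩ := hcon
    have hI : (2 * (π:ℂ) * Complex.I) ≠ 0 := by
      simp [Real.pi_ne_zero, Complex.I_ne_zero]
    have : ((-((n:ℝ)/q) : ℝ) : ℂ) = (k:ℂ) := by
      apply mul_left_cancel₀ hI
      rw [hk]; ring
    have hre : -((n:ℝ)/q) = (k:ℝ) := by exact_mod_cast this
    have hlt : -((n:ℝ)/q) < 0 := by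
      have : 0 < (n:ℝ)/q := by positivity
      linarith
    have hgt : (-1:ℝ) < -((n:ℝ)/q) := by
      have : (n:ℝ)/q < 1 := (div_lt_one hq).mpr hnq
      linarith
    rcases le_or_gt 0 k with hk0 | hk0
    · have : (0:ℝ) ≤ (k:ℝ) := by exact_mod_cast hk0
      linarith
    · have hk1 : k ≤ -1 := by omega
      have : (k:ℝ) ≤ -1 := by exact_mod_cast hk1
      linarith
  have habs : ‖z - 1‖ = 2 * Real.sin (π * n / q) := by
    rw [hzdef]; unfold e
    have harg : 2 * (π:ℂ) * Complex.I * ((-((n:ℝ)/q) : ℝ) : ℂ)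
        = ((2 * π * (-((n:ℝ)/q)) : ℝ) : ℂ) * Complex.I := by push_cast; ring
    rw [harg, abs_exp_I_sub_one]
    congr 1
    have : 2 * π * (-((n:ℝ)/q)) / 2 = -(π * n / q) := by ring
    rw [this, Real.sin_neg, abs_neg, _root_.abs_of_nonneg]
    apply Real.sin_nonneg_of_nonneg_of_le_pi
    · positivity
    · rw [div_le_iff₀ hq]; nlinarith [Real.pi_pos]
  have hterm : ∀ b ∈ Finset.Icc (B+1) (B+L),
      e (-(((n : ℝ) * (b : ℝ)) / q)) = z ^ b := by
    intro b _
    rw [hzdef]; unfold e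
    rw [← Complex.exp_int_mul]
    congr 1
    push_cast
    ring
  rw [Finset.sum_congr rfl hterm]
  have hsin : 2 * min (n:ℝ) ((q:ℝ) - n) / q ≤ Real.sin (π * n / q) := sin_lower h1 h2
  have hminpos : 0 < min (n:ℝ) ((q:ℝ) - n) := by
    apply lt_min hn; linarith
  have hsinpos : 0 < Real.sin (π * n / q) := lt_of_lt_of_le (by positivity) hsin
  calc ‖∑ b ∈ Finset.Icc (B + 1) (B + L), z ^ b‖
      ≤ 2 / ‖z - 1‖ := geom_bound z hz1 hza B L
    _ = 1 / Real.sin (π * n / q) := by rw [habs]; field_simp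
    _ ≤ 1 / (2 * min (n:ℝ) ((q:ℝ) - n) / q) := by
        apply one_div_le_one_div_of_le (by positivity) hsin
    _ = (q/2 : ℝ) * (1 / min (n:ℝ) ((q:ℝ) - n)) := by
        rw [div_div_eq_mul_div]
        field_simp
    _ ≤ (q/2 : ℝ) * (1 / n + 1 / ((q:ℝ) - n)) := by
        apply mul_le_mul_of_nonneg_left _ (by positivity)
        rcases min_choice (n:ℝ) ((q:ℝ) - n) with hm | hm <;> rw [hm]
        · have : 0 ≤ 1 / ((q:ℝ) - n) := by
            apply div_nonneg zero_le_one; linarith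
          linarith
        · have : 0 ≤ 1 / (n:ℝ) := by positivity
          linarith


lemma harm_bound (N : ℕ) : ∑ m ∈ Finset.Icc 1 N, (1:ℝ)/m ≤ 1 + Real.log N := by
  have h1 : ∑ m ∈ Finset.Icc 1 N, (1:ℝ)/m = ((harmonic N : ℚ) : ℝ) := by
    rw [harmonic_eq_sum_Icc]
    push_cast
    simp [one_div]
  rw [h1]
  exact harmonic_le_one_add_log N

lemma gcd_sum (q : ℕ) (hq : 0 < q) :
    ∑ n ∈ Finset.Icc 1 (q-1), (Nat.gcd n q : ℝ) / n
      ≤ (q.divisors.card : ℝ) * (1 + Real.log (q-1:ℕ)) := by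
  have step1 : ∀ n ∈ Finset.Icc 1 (q-1), (Nat.gcd n q : ℝ) / n
      ≤ ∑ d ∈ q.divisors, (if d ∣ n then (d:ℝ)/n else 0) := by
    intro n hn
    simp only [Finset.mem_Icc] at hn
    have hmem : Nat.gcd n q ∈ q.divisors :=
      Nat.mem_divisors.mpr ⟨Nat.gcd_dvd_right n q, hq.ne'⟩
    have := Finset.single_le_sum (f := fun d => if d ∣ n then (d:ℝ)/n else 0)
      (fun d _ => by positivity) hmem
    simpa [Nat.gcd_dvd_left n q] using this
  calc ∑ n ∈ Finset.Icc 1 (q-1), (Nat.gcd n q : ℝ) / n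
      ≤ ∑ n ∈ Finset.Icc 1 (q-1), ∑ d ∈ q.divisors, (if d ∣ n then (d:ℝ)/n else 0) :=
        Finset.sum_le_sum step1
    _ = ∑ d ∈ q.divisors, ∑ n ∈ Finset.Icc 1 (q-1), (if d ∣ n then (d:ℝ)/n else 0) :=
        Finset.sum_comm
    _ ≤ ∑ d ∈ q.divisors, ∑ m ∈ Finset.Icc 1 (q-1), (1:ℝ)/m := by
        apply Finset.sum_le_sum
        intro d hd
        have hd1 : 1 ≤ d := (Nat.pos_of_mem_divisors hd)
        rw [← Finset.sum_filter]
        set s := (Finset.Icc 1 (q-1)).filter (d ∣ ·) with hs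
        have hinj : Set.InjOn (· / d) s := by
          intro n1 h1 n2 h2 heq
          simp only [hs, Finset.coe_filter, Finset.mem_Icc, Set.mem_setOf_eq] at h1 h2
          have e1 : n1 / d * d = n1 := Nat.div_mul_cancel h1.2
          have e2 : n2 / d * d = n2 := Nat.div_mul_cancel h2.2
          have heq' : n1 / d = n2 / d := heq
          rw [heq'] at e1
          omega
        have himg : ∑ n ∈ s, (d:ℝ)/n = ∑ m ∈ s.image (· / d), (1:ℝ)/m := by
          rw [Finset.sum_image (fun x hx y hy => hinj hx hy)]
          apply Finset.sum_congr rfl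
          intro n hn
          simp only [hs, Finset.mem_filter, Finset.mem_Icc] at hn
          have hcast : ((n / d : ℕ):ℝ) = (n:ℝ)/d :=
            Nat.cast_div hn.2 (Nat.cast_ne_zero.mpr (by omega))
          rw [hcast, one_div_div]
        rw [himg]
        apply Finset.sum_le_sum_of_subset_of_nonneg
        · intro m hm
          simp only [Finset.mem_image, hs, Finset.mem_filter, Finset.mem_Icc] at hm
          obtain ⟨n, ⟨⟨hn1, hn2⟩, hdn⟩, rfl⟩ := hm
          simp only [Finset.mem_Icc]
          constructor
          · rw [Nat.one_le_div_iff hd1]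
            exact Nat.le_of_dvd (by omega) hdn
          · exact le_trans (Nat.div_le_self n d) hn2
        · intro m _ _
          positivity
    _ = (q.divisors.card : ℝ) * ∑ m ∈ Finset.Icc 1 (q-1), (1:ℝ)/m := by
        rw [Finset.sum_const, nsmul_eq_mul]
    _ ≤ (q.divisors.card : ℝ) * (1 + Real.log (q-1:ℕ)) := by
        apply mul_le_mul_of_nonneg_left (harm_bound _) (by positivity)

theorem kloosterman_lemma1 :
    ∃ C : ℝ, 0 < C ∧ ∀ (q : ℕ) (B L : ℤ), 0 < q → 1 ≤ L →
      ∑ n ∈ Finset.Icc 1 (q - 1), (Nat.gcd n q : ℝ) *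
          ‖∑ b ∈ Finset.Icc (B + 1) (B + L), e (-(((n : ℝ) * (b : ℝ)) / q))‖
        ≤ C * (Nat.divisors q).card * q * Real.log (q + 1) := by
  refine ⟨2, by norm_num, ?_⟩
  intro q B L hq hL
  rcases eq_or_lt_of_le (Nat.one_le_iff_ne_zero.mpr hq.ne') with hq1 | hq2
  · -- q = 1
    rw [← hq1]
    norm_num
    positivity
  -- q ≥ 2
  have hq2' : 2 ≤ q := hq2
  have hqR : (0:ℝ) < q := by positivity
  have key : ∀ n ∈ Finset.Icc 1 (q-1),
      (Nat.gcd n q : ℝ) * ‖∑ b ∈ Finset.Icc (B + 1) (B + L),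
        e (-(((n : ℝ) * (b : ℝ)) / q))‖
      ≤ (q/2 : ℝ) * ((Nat.gcd n q : ℝ) / n) + (q/2 : ℝ) * ((Nat.gcd n q : ℝ) / ((q:ℝ) - n)) := by
    intro n hn
    simp only [Finset.mem_Icc] at hn
    have hb := term_bound q n B L hn.1 (by omega)
    calc (Nat.gcd n q : ℝ) * ‖∑ b ∈ Finset.Icc (B + 1) (B + L),
          e (-(((n : ℝ) * (b : ℝ)) / q))‖
        ≤ (Nat.gcd n q : ℝ) * ((q / 2 : ℝ) * (1 / n + 1 / ((q:ℝ) - n))) := by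
          apply mul_le_mul_of_nonneg_left hb (by positivity)
      _ = (q/2 : ℝ) * ((Nat.gcd n q : ℝ) / n) + (q/2 : ℝ) * ((Nat.gcd n q : ℝ) / ((q:ℝ) - n)) := by
          ring
  have hsym : ∑ n ∈ Finset.Icc 1 (q-1), (Nat.gcd n q : ℝ) / ((q:ℝ) - n)
      = ∑ n ∈ Finset.Icc 1 (q-1), (Nat.gcd n q : ℝ) / n := by
    refine Finset.sum_nbij' (fun n => q - n) (fun n => q - n) ?_ ?_ ?_ ?_ ?_
    · intro n hn; simp only [Finset.mem_Icc] at hn ⊢; omega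
    · intro n hn; simp only [Finset.mem_Icc] at hn ⊢; omega
    · intro n hn; simp only [Finset.mem_Icc] at hn; show q - (q - n) = n; omega
    · intro n hn; simp only [Finset.mem_Icc] at hn; show q - (q - n) = n; omega
    · intro n hn
      simp only [Finset.mem_Icc] at hn
      have hle : n ≤ q := by omega
      rw [Nat.gcd_self_sub_left hle, Nat.cast_sub hle]
  have hgcd := gcd_sum q hq
  have hlog1 : (1:ℝ) ≤ Real.log (q + 1) := by
    have h3 : (3:ℝ) ≤ (q:ℝ) + 1 := by
      have : (2:ℝ) ≤ q := by exact_mod_cast hq2'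
      linarith
    have he : Real.exp 1 ≤ (q:ℝ) + 1 := by
      have := Real.exp_one_lt_d9
      linarith
    calc (1:ℝ) = Real.log (Real.exp 1) := (Real.log_exp 1).symm
      _ ≤ Real.log ((q:ℝ) + 1) := Real.log_le_log (Real.exp_pos 1) he
  have hlog2 : Real.log ((q-1:ℕ):ℝ) ≤ Real.log ((q:ℝ) + 1) := by
    rcases eq_or_lt_of_le hq2' with h2 | h3
    · rw [← h2]
      norm_num
      exact Real.log_nonneg (by norm_num)
    · apply Real.log_le_log
      · have : (1:ℝ) ≤ ((q-1:ℕ):ℝ) := by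
          have : 1 ≤ q - 1 := by omega
          exact_mod_cast this
        linarith
      · have : ((q-1:ℕ):ℝ) ≤ (q:ℝ) := by
          have : q - 1 ≤ q := by omega
          exact_mod_cast this
        linarith
  calc ∑ n ∈ Finset.Icc 1 (q - 1), (Nat.gcd n q : ℝ) *
          ‖∑ b ∈ Finset.Icc (B + 1) (B + L), e (-(((n : ℝ) * (b : ℝ)) / q))‖
      ≤ ∑ n ∈ Finset.Icc 1 (q-1), ((q/2 : ℝ) * ((Nat.gcd n q : ℝ) / n)
          + (q/2 : ℝ) * ((Nat.gcd n q : ℝ) / ((q:ℝ) - n))) := Finset.sum_le_sum key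
    _ = (q/2 : ℝ) * (∑ n ∈ Finset.Icc 1 (q-1), (Nat.gcd n q : ℝ) / n)
        + (q/2 : ℝ) * (∑ n ∈ Finset.Icc 1 (q-1), (Nat.gcd n q : ℝ) / ((q:ℝ) - n)) := by
        rw [Finset.sum_add_distrib, Finset.mul_sum, Finset.mul_sum]
    _ = (q:ℝ) * ∑ n ∈ Finset.Icc 1 (q-1), (Nat.gcd n q : ℝ) / n := by
        rw [hsym]; ring
    _ ≤ (q:ℝ) * ((q.divisors.card : ℝ) * (1 + Real.log (q-1:ℕ))) := by
        apply mul_le_mul_of_nonneg_left hgcd (by positivity)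
    _ ≤ (q:ℝ) * ((q.divisors.card : ℝ) * (2 * Real.log ((q:ℝ) + 1))) := by
        apply mul_le_mul_of_nonneg_left _ (by positivity)
        apply mul_le_mul_of_nonneg_left _ (by positivity)
        linarith
    _ = 2 * (q.divisors.card : ℝ) * q * Real.log ((q:ℝ) + 1) := by ring
end

section
/- Let p be a prime with p > 3 and a, b integers with gcd(a, b, p) = 1. Then the rational function R(x) = (a x⁵ + b)/x³ over the algebraic closure of F_p cannot be written as h(x)^p − h(x) for any rational function h(x) over the algebraic closure of F_p. -/
open RatFunc Polynomial
open scoped nonZeroDivisors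

variable {K : Type*} [Field K]

theorem intDegree_pow' (x : RatFunc K) (hx : x ≠ 0) (n : ℕ) :
    (x ^ n).intDegree = n * x.intDegree := by
  induction n with
  | zero => simp
  | succ n ih =>
    rw [pow_succ, RatFunc.intDegree_mul (pow_ne_zero _ hx) hx, ih]
    push_cast; ring

theorem intDegree_add_eq_left' {x y : RatFunc K} (hx : x ≠ 0) (hy : y ≠ 0)
    (hlt : y.intDegree < x.intDegree) : (x + y).intDegree = x.intDegree := by
  have hxy : x + y ≠ 0 := by
    intro h
    have : y = -x := by linear_combination h
    rw [this, RatFunc.intDegree_neg] at hlt; exact lt_irrefl _ hlt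
  have h1 : (x + y).intDegree ≤ x.intDegree := by
    have := RatFunc.intDegree_add_le hy hxy
    omega
  have h2 : x.intDegree ≤ max (x + y).intDegree (-y).intDegree := by
    have hx' : (x + y) + -y ≠ 0 := by simpa using hx
    have := RatFunc.intDegree_add_le (x := x + y) (y := -y) (neg_ne_zero.mpr hy) hx'
    simpa using this
  rw [RatFunc.intDegree_neg] at h2
  omega

theorem key_lemma (p : ℕ) (hp2 : 2 ≤ p) (h : RatFunc K) (hq : h ^ p - h ≠ 0) :
    (h ^ p - h).intDegree ≤ 0 ∨ (p : ℤ) ≤ (h ^ p - h).intDegree := by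
  by_cases h0 : h = 0
  · subst h0; simp [zero_pow (by omega : p ≠ 0)] at hq
  have hpow := intDegree_pow' h h0 p
  have hsub : h ^ p - h = h ^ p + (-h) := by ring
  rcases le_or_gt h.intDegree 0 with hd | hd
  · left
    rw [hsub]
    have hle := RatFunc.intDegree_add_le (x := h ^ p) (y := -h) (neg_ne_zero.mpr h0)
      (by rw [← hsub]; exact hq)
    rw [RatFunc.intDegree_neg, hpow] at hle
    have : (p : ℤ) * h.intDegree ≤ 0 := mul_nonpos_of_nonneg_of_nonpos (by positivity) hd
    omega
  · right
    rw [hsub, intDegree_add_eq_left' (pow_ne_zero _ h0) (neg_ne_zero.mpr h0), hpow]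
    · nlinarith [hd]
    · rw [RatFunc.intDegree_neg, hpow]
      nlinarith [hd]

theorem eval₂_X_ratfunc (r : K[X]) :
    Polynomial.eval₂ (algebraMap K (RatFunc K)) RatFunc.X r
      = algebraMap K[X] (RatFunc K) r := by
  have : (Polynomial.aeval (RatFunc.X : RatFunc K) : K[X] →ₐ[K] RatFunc K)
      = IsScalarTower.toAlgHom K K[X] (RatFunc K) := by
    apply Polynomial.algHom_ext
    simp [RatFunc.algebraMap_X]
  have hr := DFunLike.congr_fun this r
  simpa [Polynomial.aeval_def] using hr

theorem eval_inv_ne_zero {q : K[X]} (hq : q ≠ 0) :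
    Polynomial.eval₂ (algebraMap K (RatFunc K)) (RatFunc.X)⁻¹ q ≠ 0 := by
  have hX : (RatFunc.X : RatFunc K) ≠ 0 := RatFunc.X_ne_zero
  have hXi : (RatFunc.X : RatFunc K)⁻¹ ≠ 0 := inv_ne_zero hX
  letI : Invertible ((RatFunc.X : RatFunc K)⁻¹) := invertibleOfNonzero hXi
  have hinv : ⅟((RatFunc.X : RatFunc K)⁻¹) = RatFunc.X := by
    rw [invOf_eq_inv, inv_inv]
  have hmul := Polynomial.eval₂_reflect_mul_pow (algebraMap K (RatFunc K))
    ((RatFunc.X : RatFunc K)⁻¹) q.natDegree q le_rfl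
  rw [hinv, eval₂_X_ratfunc] at hmul
  rw [← hmul]
  exact mul_ne_zero
    (RatFunc.algebraMap_ne_zero (by rwa [Ne, Polynomial.reflect_eq_zero_iff]))
    (pow_ne_zero _ hXi)

theorem not_artin_schreier (p : ℕ) [Fact p.Prime] (hp : 3 < p) (a b : ℤ)
    (hab : Nat.gcd (Int.gcd a b) p = 1) :
    ¬ ∃ h : RatFunc (AlgebraicClosure (ZMod p)),
      (RatFunc.C ((a : AlgebraicClosure (ZMod p))) * RatFunc.X ^ 5 +
          RatFunc.C ((b : AlgebraicClosure (ZMod p)))) / RatFunc.X ^ 3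
        = h ^ p - h := by
  set K := AlgebraicClosure (ZMod p) with hK
  rintro ⟨h, heq⟩
  -- arithmetic: not both a b divisible by p
  have hor : (a : ZMod p) ≠ 0 ∨ (b : ZMod p) ≠ 0 := by
    by_contra hc
    push_neg at hc
    obtain ⟨ha0, hb0⟩ := hc
    have pa : (p : ℤ) ∣ a := (ZMod.intCast_zmod_eq_zero_iff_dvd a p).mp ha0
    have pb : (p : ℤ) ∣ b := (ZMod.intCast_zmod_eq_zero_iff_dvd b p).mp hb0
    have hd : (p : ℤ) ∣ (Int.gcd a b : ℤ) := Int.dvd_coe_gcd pa pb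
    have hd' : p ∣ Int.gcd a b := Int.ofNat_dvd.mp hd
    have : p ∣ Nat.gcd (Int.gcd a b) p := Nat.dvd_gcd hd' dvd_rfl
    rw [hab] at this
    have := Nat.le_of_dvd one_pos this
    omega
  have hinj : Function.Injective (algebraMap (ZMod p) K) := (algebraMap (ZMod p) K).injective
  have castiff : ∀ n : ℤ, ((n : K) = 0 ↔ (n : ZMod p) = 0) := by
    intro n
    rw [← map_intCast (algebraMap (ZMod p) K) n, map_eq_zero_iff _ hinj]
  by_cases hA : (a : K) = 0
  · -- case a ≡ 0, b ≢ 0 : use substitution X ↦ X⁻¹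
    have hB : (b : K) ≠ 0 := by
      rw [Ne, castiff]
      rcases hor with h' | h'
      · exact absurd ((castiff a).mp hA) h'
      · exact h'
    -- rewrite LHS
    rw [hA] at heq
    have heq2 : algebraMap K[X] (RatFunc K) (Polynomial.C (b : K)) /
        algebraMap K[X] (RatFunc K) (Polynomial.X ^ 3) = h ^ p - h := by
      rw [← heq]
      simp [RatFunc.algebraMap_C, map_pow, RatFunc.algebraMap_X]
      rw [show RatFunc.C (b : K) = (b : RatFunc K) from map_intCast _ _]
    -- the substitution homomorphism
    set φ0 : K[X] →+* RatFunc K :=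
      Polynomial.eval₂RingHom (algebraMap K (RatFunc K)) (RatFunc.X)⁻¹ with hφ0
    have hφ : K[X]⁰ ≤ (RatFunc K)⁰.comap φ0 := by
      intro q hq
      rw [Submonoid.mem_comap]
      exact mem_nonZeroDivisors_iff_ne_zero.mpr
        (eval_inv_ne_zero (mem_nonZeroDivisors_iff_ne_zero.mp hq))
    set Φ : RatFunc K →+* RatFunc K := RatFunc.liftRingHom φ0 hφ with hΦ
    have heq3 := congrArg Φ heq2
    have hc : φ0 (Polynomial.C (b : K)) = RatFunc.C (b : K) := by
      simp [hφ0, ← RatFunc.algebraMap_eq_C]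
    have hx : φ0 (Polynomial.X ^ 3) = (RatFunc.X)⁻¹ ^ 3 := by
      simp [hφ0]
    rw [map_sub, RatFunc.liftRingHom_apply_div, hc, hx, map_pow] at heq3
    have heq4 : algebraMap K[X] (RatFunc K) (Polynomial.C (b : K) * Polynomial.X ^ 3)
        = Φ h ^ p - Φ h := by
      rw [← heq3, inv_pow, div_eq_mul_inv, inv_inv]
      simp [RatFunc.algebraMap_C, map_pow, RatFunc.algebraMap_X]
    have hM : (Polynomial.C (b : K) * Polynomial.X ^ 3) ≠ 0 := by
      intro hc'
      apply hB
      simpa [Polynomial.X_pow_mul] using congrArg (Polynomial.coeff · 3) hc'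
    have hq0 : Φ h ^ p - Φ h ≠ 0 := by
      rw [← heq4]; exact RatFunc.algebraMap_ne_zero hM
    have hdeg : (Φ h ^ p - Φ h).intDegree = 3 := by
      rw [← heq4, RatFunc.intDegree_polynomial,
        Polynomial.natDegree_C_mul_X_pow 3 _ hB]
      norm_num
    have := key_lemma p (by omega) (Φ h) hq0
    rw [hdeg] at this
    omega
  · -- case a ≢ 0 : degree at infinity
    set N : K[X] := Polynomial.C (a : K) * Polynomial.X ^ 5 + Polynomial.C (b : K) with hN
    have hN5 : N.natDegree = 5 := by
      rw [hN]; compute_degree!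
    have hN0 : N ≠ 0 := by
      intro hc'
      rw [hc'] at hN5
      simp at hN5
    have heq2 : algebraMap K[X] (RatFunc K) N /
        algebraMap K[X] (RatFunc K) (Polynomial.X ^ 3) = h ^ p - h := by
      rw [← heq, hN]
      simp [RatFunc.algebraMap_C, map_pow, RatFunc.algebraMap_X]
      rw [show RatFunc.C (a : K) = (a : RatFunc K) from map_intCast (RatFunc.C (K := K)) a,
        show RatFunc.C (b : K) = (b : RatFunc K) from map_intCast (RatFunc.C (K := K)) b]
    have hden : algebraMap K[X] (RatFunc K) (Polynomial.X ^ 3) ≠ 0 :=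
      RatFunc.algebraMap_ne_zero (pow_ne_zero _ Polynomial.X_ne_zero)
    have hR0 : h ^ p - h ≠ 0 := by
      rw [← heq2]
      exact div_ne_zero (RatFunc.algebraMap_ne_zero hN0) hden
    have hmul : (h ^ p - h) * algebraMap K[X] (RatFunc K) (Polynomial.X ^ 3)
        = algebraMap K[X] (RatFunc K) N := by
      rw [← heq2, div_mul_cancel₀ _ hden]
    have hdeg := congrArg RatFunc.intDegree hmul
    rw [RatFunc.intDegree_mul hR0 hden, RatFunc.intDegree_polynomial,
      RatFunc.intDegree_polynomial, hN5, Polynomial.natDegree_X_pow] at hdeg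
    have := key_lemma p (by omega) h hR0
    omega
end
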